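/- Let X be a Banach space with a 1-projectional skeleton {P_s : s ∈ Γ} (each ‖P_s‖ = 1). Suppose {T_α : α < κ} is an increasing continuous chain of up-directed subsets of Γ (continuity: T_δ = ⋃_{ξ<δ} T_ξ for limit δ) with |T_α| ≤ |α| + ℵ₀, such that ⋃{P_s X : s ∈ T_α, α < κ} is dense in X, and such that for each α the net limit P_α x := lim_{s∈T_α} P_s x exists for all x. Then {P_α : α < κ} is a projectional resolution of the identity on X: each P_α is a norm-one projection onto X_α = closure(⋃_{s∈T_α} P_s X), dens(P_α X) ≤ |α| + ℵ₀, P_α = P_α ∘ P_β = P_β ∘ P_α for α < β, X_δ = closure(⋃_{ξ<δ} X_ξ) for limit δ, and X = closure(⋃_{α<κ} X_α). -/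

import Mathlib

/-- A projectional skeleton in a Banach space `X`: a family of bounded projections
`P s`, indexed by an up-directed partial order `Γ`, such that `X = ⋃ₛ im (P s)`,
each image is separable, `P s = P s ∘ P t = P t ∘ P s` for `s ≤ t`, and every
increasing sequence has a supremum `t` with `im (P t) = closure (⋃ₙ im (P sₙ))`. -/
structure ProjSkeleton (X : Type*) [NormedAddCommGroup X] [NormedSpace ℝ X]
    (Γ : Type*) [PartialOrder Γ] where
  P : Γ → X →L[ℝ] X
  directed : ∀ s t : Γ, ∃ u, s ≤ u ∧ t ≤ u
  idem : ∀ s, (P s).comp (P s) = P s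
  covers : ∀ x : X, ∃ s, P s x = x
  sep : ∀ s, TopologicalSpace.IsSeparable (Set.range (P s))
  comp_of_le : ∀ s t, s ≤ t → (P s).comp (P t) = P s ∧ (P t).comp (P s) = P s
  lub_exists : ∀ u : ℕ → Γ, StrictMono u → ∃ t, IsLUB (Set.range u) t
  range_lub : ∀ u : ℕ → Γ, StrictMono u → ∀ t, IsLUB (Set.range u) t →
    Set.range (P t) = closure (⋃ n, Set.range (P (u n)))

open Cardinal in
/-- from a 1-projectional skeleton and a continuous increasing chain
`{T α : α < κ}` of up-directed subsets of `Γ` with `|T α| ≤ |α| + ℵ₀` whose images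
are dense in `X`, and such that the net limits `P_α x = lim_{s ∈ T α} P s x` exist,
one obtains a projectional resolution of the identity `{Q α : α < κ}`. -/
theorem statement5 {X : Type} [NormedAddCommGroup X] [NormedSpace ℝ X] [CompleteSpace X]
    {Γ : Type} [PartialOrder Γ] (Sk : ProjSkeleton X Γ)
    (hone : ∀ s, ‖Sk.P s‖ = 1)
    (κ : Ordinal) (T : Ordinal → Set Γ)
    (hmono : ∀ α β, α ≤ β → β < κ → T α ⊆ T β)
    (hcont : ∀ δ, δ < κ → Order.IsSuccLimit δ → T δ = ⋃ ξ < δ, T ξ)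
    (hdir : ∀ α, α < κ → ∀ s ∈ T α, ∀ t ∈ T α, ∃ v ∈ T α, s ≤ v ∧ t ≤ v)
    (hcard : ∀ α, α < κ → Cardinal.mk (T α) ≤ α.card + Cardinal.aleph0)
    (hdense : closure (⋃ α < κ, ⋃ s ∈ T α, Set.range (Sk.P s)) = Set.univ)
    (hlim : ∀ α, α < κ → ∀ x : X, ∃ y : X, ∀ ε > (0:ℝ),
      ∃ t ∈ T α, ∀ s ∈ T α, t ≤ s → ‖Sk.P s x - y‖ < ε) :
    ∃ Q : Ordinal → X →L[ℝ] X,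
      (∀ α, α < κ → ∀ x : X, ∀ ε > (0:ℝ),
        ∃ t ∈ T α, ∀ s ∈ T α, t ≤ s → ‖Sk.P s x - Q α x‖ < ε) ∧
      (∀ α, α < κ → ‖Q α‖ = 1 ∧ (Q α).comp (Q α) = Q α) ∧
      (∀ α, α < κ → Set.range (Q α) = closure (⋃ s ∈ T α, Set.range (Sk.P s))) ∧
      (∀ α, α < κ → ∃ A : Set X, A ⊆ Set.range (Q α) ∧
        Cardinal.mk A ≤ α.card + Cardinal.aleph0 ∧ Set.range (Q α) ⊆ closure A) ∧
      (∀ α β, α < β → β < κ →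
        (Q α).comp (Q β) = Q α ∧ (Q β).comp (Q α) = Q α) ∧
      (∀ δ, δ < κ → Order.IsSuccLimit δ →
        Set.range (Q δ) = closure (⋃ ξ < δ, Set.range (Q ξ))) ∧
      closure (⋃ α < κ, Set.range (Q α)) = Set.univ := by
  classical
  have hPnorm : ∀ (s : Γ) (x : X), ‖Sk.P s x‖ ≤ ‖x‖ := by
    intro s x
    calc ‖Sk.P s x‖ ≤ ‖Sk.P s‖ * ‖x‖ := (Sk.P s).le_opNorm x
      _ = ‖x‖ := by rw [hone, one_mul]
  have huniq : ∀ α, α < κ → ∀ x y y' : X,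
      (∀ ε > (0:ℝ), ∃ t ∈ T α, ∀ s ∈ T α, t ≤ s → ‖Sk.P s x - y‖ < ε) →
      (∀ ε > (0:ℝ), ∃ t ∈ T α, ∀ s ∈ T α, t ≤ s → ‖Sk.P s x - y'‖ < ε) →
      y = y' := by
    intro α hα x y y' hy hy'
    have h0 : ∀ ε > (0:ℝ), ‖y - y'‖ < ε := by
      intro ε hε
      obtain ⟨t₁, ht₁, h1⟩ := hy (ε/2) (by positivity)
      obtain ⟨t₂, ht₂, h2⟩ := hy' (ε/2) (by positivity)
      obtain ⟨v, hv, hv1, hv2⟩ := hdir α hα t₁ ht₁ t₂ ht₂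
      have e1 := h1 v hv hv1
      have e2 := h2 v hv hv2
      have heq : y - y' = -(Sk.P v x - y) + (Sk.P v x - y') := by abel
      rw [heq]
      calc ‖-(Sk.P v x - y) + (Sk.P v x - y')‖
          ≤ ‖-(Sk.P v x - y)‖ + ‖Sk.P v x - y'‖ := norm_add_le _ _
        _ = ‖Sk.P v x - y‖ + ‖Sk.P v x - y'‖ := by rw [norm_neg]
        _ < ε/2 + ε/2 := add_lt_add e1 e2
        _ = ε := by ring
    have hle : ‖y - y'‖ ≤ 0 := by
      by_contra h
      push_neg at h
      exact lt_irrefl _ (h0 _ h)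
    have h4 := le_antisymm hle (norm_nonneg _)
    rwa [norm_sub_eq_zero_iff] at h4
  have key : ∀ α, α < κ → ∃ q : X →L[ℝ] X, ∀ x, ∀ ε > (0:ℝ),
      ∃ t ∈ T α, ∀ s ∈ T α, t ≤ s → ‖Sk.P s x - q x‖ < ε := by
    intro α hα
    choose f hf using hlim α hα
    have hadd : ∀ x y, f (x + y) = f x + f y := by
      intro x y
      refine huniq α hα (x + y) _ _ (hf _) ?_
      intro ε hε
      obtain ⟨t₁, ht₁, h1⟩ := hf x (ε/2) (by positivity)
      obtain ⟨t₂, ht₂, h2⟩ := hf y (ε/2) (by positivity)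
      obtain ⟨v, hv, hv1, hv2⟩ := hdir α hα t₁ ht₁ t₂ ht₂
      refine ⟨v, hv, ?_⟩
      intro s hs hvs
      have e1 := h1 s hs (le_trans hv1 hvs)
      have e2 := h2 s hs (le_trans hv2 hvs)
      have heq : Sk.P s (x + y) - (f x + f y)
          = (Sk.P s x - f x) + (Sk.P s y - f y) := by
        rw [map_add]; abel
      rw [heq]
      calc ‖(Sk.P s x - f x) + (Sk.P s y - f y)‖
          ≤ ‖Sk.P s x - f x‖ + ‖Sk.P s y - f y‖ := norm_add_le _ _
        _ < ε/2 + ε/2 := add_lt_add e1 e2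
        _ = ε := by ring
    have hsmul : ∀ (c : ℝ) (x : X), f (c • x) = c • f x := by
      intro c x
      refine huniq α hα (c • x) _ _ (hf _) ?_
      intro ε hε
      have hc1 : (0:ℝ) < ‖c‖ + 1 := by positivity
      obtain ⟨t, ht, h1⟩ := hf x (ε / (‖c‖ + 1)) (by positivity)
      refine ⟨t, ht, ?_⟩
      intro s hs hts
      have e1 := h1 s hs hts
      have e2 : ‖Sk.P s x - f x‖ * (‖c‖ + 1) < ε := (lt_div_iff₀ hc1).mp e1
      have heq : Sk.P s (c • x) - c • f x = c • (Sk.P s x - f x) := by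
        rw [map_smul, smul_sub]
      rw [heq, norm_smul]
      nlinarith [norm_nonneg (Sk.P s x - f x), norm_nonneg c]
    have hbound : ∀ x, ‖f x‖ ≤ 1 * ‖x‖ := by
      intro x
      rw [one_mul]
      refine le_of_forall_pos_le_add ?_
      intro ε hε
      obtain ⟨t, ht, h1⟩ := hf x ε hε
      have e1 := h1 t ht le_rfl
      calc ‖f x‖ = ‖Sk.P t x - (Sk.P t x - f x)‖ := by congr 1; abel
        _ ≤ ‖Sk.P t x‖ + ‖Sk.P t x - f x‖ := norm_sub_le _ _
        _ ≤ ‖x‖ + ε := add_le_add (hPnorm t x) e1.le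
    exact ⟨LinearMap.mkContinuous
      { toFun := f, map_add' := hadd, map_smul' := hsmul } 1 hbound,
      fun x => hf x⟩
  choose Qf hQf using key
  have hTne : ∀ α, α < κ → (T α).Nonempty := by
    intro α hα
    obtain ⟨y, hy⟩ := hlim α hα 0
    obtain ⟨t, ht, -⟩ := hy 1 one_pos
    exact ⟨t, ht⟩
  have hfixU : ∀ α (hα : α < κ), ∀ x ∈ ⋃ s ∈ T α, Set.range (Sk.P s),
      Qf α hα x = x := by
    intro α hα x hx
    simp only [Set.mem_iUnion, Set.mem_range] at hx
    obtain ⟨s, hs, z, hz⟩ := hx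
    have hPx : Sk.P s x = x := by
      rw [← hz]
      have h3 := congrArg (fun (L : X →L[ℝ] X) => L z) (Sk.idem s)
      simpa using h3
    refine huniq α hα x _ _ (hQf α hα x) ?_
    intro ε hε
    refine ⟨s, hs, ?_⟩
    intro u hu hsu
    have h1 : Sk.P u x = x := by
      have h2 := congrArg (fun (L : X →L[ℝ] X) => L x) (Sk.comp_of_le s u hsu).2
      simp only [ContinuousLinearMap.comp_apply] at h2
      rw [← hPx]
      exact h2
    rw [h1, sub_self, norm_zero]
    exact hε
  have hfix : ∀ α (hα : α < κ), ∀ x ∈ closure (⋃ s ∈ T α, Set.range (Sk.P s)),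
      Qf α hα x = x := by
    intro α hα
    have hcl : IsClosed {x : X | Qf α hα x = x} :=
      isClosed_eq (Qf α hα).continuous continuous_id
    intro x hx
    exact closure_minimal (fun y hy => hfixU α hα y hy) hcl hx
  have hsub : ∀ α (hα : α < κ),
      Set.range (Qf α hα) ⊆ closure (⋃ s ∈ T α, Set.range (Sk.P s)) := by
    rintro α hα _ ⟨x, rfl⟩
    rw [Metric.mem_closure_iff]
    intro ε hε
    obtain ⟨t, ht, h1⟩ := hQf α hα x ε hε
    refine ⟨Sk.P t x, Set.mem_iUnion₂.mpr ⟨t, ht, ⟨x, rfl⟩⟩, ?_⟩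
    rw [dist_eq_norm, norm_sub_rev]
    exact h1 t ht le_rfl
  have hrange : ∀ α (hα : α < κ),
      Set.range (Qf α hα) = closure (⋃ s ∈ T α, Set.range (Sk.P s)) := by
    intro α hα
    refine Set.Subset.antisymm (hsub α hα) ?_
    intro x hx
    exact ⟨x, hfix α hα x hx⟩
  have hQle : ∀ α (hα : α < κ) (x : X), ‖Qf α hα x‖ ≤ ‖x‖ := by
    intro α hα x
    refine le_of_forall_pos_le_add ?_
    intro ε hε
    obtain ⟨t, ht, h1⟩ := hQf α hα x ε hε
    have e1 := h1 t ht le_rfl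
    calc ‖Qf α hα x‖ = ‖Sk.P t x - (Sk.P t x - Qf α hα x)‖ := by congr 1; abel
      _ ≤ ‖Sk.P t x‖ + ‖Sk.P t x - Qf α hα x‖ := norm_sub_le _ _
      _ ≤ ‖x‖ + ε := add_le_add (hPnorm t x) e1.le
  have hPQ : ∀ β (hβ : β < κ), ∀ s ∈ T β, ∀ x : X,
      Sk.P s (Qf β hβ x) = Sk.P s x := by
    intro β hβ s hs x
    have h0 : ∀ ε > (0:ℝ), ‖Sk.P s (Qf β hβ x) - Sk.P s x‖ < ε := by
      intro ε hε
      obtain ⟨t, ht, h1⟩ := hQf β hβ x ε hε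
      obtain ⟨v, hv, hsv, htv⟩ := hdir β hβ s hs t ht
      have e1 := h1 v hv htv
      have h2 : Sk.P s (Sk.P v x) = Sk.P s x := by
        have h3 := congrArg (fun (L : X →L[ℝ] X) => L x) (Sk.comp_of_le s v hsv).1
        simpa using h3
      calc ‖Sk.P s (Qf β hβ x) - Sk.P s x‖
          = ‖Sk.P s (Qf β hβ x - Sk.P v x)‖ := by rw [map_sub, h2]
        _ ≤ ‖Qf β hβ x - Sk.P v x‖ := hPnorm s _
        _ = ‖Sk.P v x - Qf β hβ x‖ := norm_sub_rev _ _
        _ < ε := e1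
    have hle : ‖Sk.P s (Qf β hβ x) - Sk.P s x‖ ≤ 0 := by
      by_contra h
      push_neg at h
      exact lt_irrefl _ (h0 _ h)
    have h4 := le_antisymm hle (norm_nonneg _)
    rwa [norm_sub_eq_zero_iff] at h4
  refine ⟨fun α => if h : α < κ then Qf α h else 0, ?_, ?_, ?_, ?_, ?_, ?_, ?_⟩
  · intro α hα x ε hε
    simpa only [dif_pos hα] using hQf α hα x ε hε
  · intro α hα
    simp only [dif_pos hα]
    constructor
    · refine le_antisymm (ContinuousLinearMap.opNorm_le_bound _ zero_le_one
        (fun x => by rw [one_mul]; exact hQle α hα x)) ?_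
      obtain ⟨t, ht⟩ := hTne α hα
      have hPt : Sk.P t ≠ 0 := by
        intro h
        have := hone t
        rw [h, norm_zero] at this
        exact zero_ne_one this
      have hz : ∃ z : X, Sk.P t z ≠ 0 := by
        by_contra h
        push_neg at h
        exact hPt (ContinuousLinearMap.ext fun z => h z)
      obtain ⟨z, hz⟩ := hz
      have hx : Qf α hα (Sk.P t z) = Sk.P t z :=
        hfixU α hα _ (Set.mem_iUnion₂.mpr ⟨t, ht, ⟨z, rfl⟩⟩)
      have h5 : ‖Sk.P t z‖ ≤ ‖Qf α hα‖ * ‖Sk.P t z‖ := by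
        calc ‖Sk.P t z‖ = ‖Qf α hα (Sk.P t z)‖ := by rw [hx]
          _ ≤ ‖Qf α hα‖ * ‖Sk.P t z‖ := (Qf α hα).le_opNorm _
      have h6 : 0 < ‖Sk.P t z‖ := norm_pos_iff.mpr hz
      nlinarith
    · ext x
      simp only [ContinuousLinearMap.comp_apply]
      exact hfix α hα _ (hsub α hα ⟨x, rfl⟩)
  · intro α hα
    simp only [dif_pos hα]
    exact hrange α hα
  · intro α hα
    simp only [dif_pos hα]
    have hsep : ∀ s : Γ, ∃ D : Set X, D ⊆ Set.range (Sk.P s) ∧ D.Countable ∧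
        Set.range (Sk.P s) ⊆ closure D :=
      fun s => (Sk.sep s).exists_countable_dense_subset
    choose D hD1 hD2 hD3 using hsep
    refine ⟨⋃ s ∈ T α, D s, ?_, ?_, ?_⟩
    · intro x hx
      simp only [Set.mem_iUnion] at hx
      obtain ⟨s, hs, hxD⟩ := hx
      rw [hrange α hα]
      exact subset_closure (Set.mem_iUnion₂.mpr ⟨s, hs, hD1 s hxD⟩)
    · have hne : Nonempty ↥(T α) := by
        obtain ⟨t, ht⟩ := hTne α hα
        exact ⟨⟨t, ht⟩⟩
      have h1 : Cardinal.mk ↥(⋃ s ∈ T α, D s)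
          ≤ Cardinal.mk ↥(T α) * Cardinal.aleph0 := by
        rw [Set.biUnion_eq_iUnion]
        refine le_trans (Cardinal.mk_iUnion_le _) ?_
        refine mul_le_mul' le_rfl ?_
        refine ciSup_le ?_
        intro i
        have := (hD2 i.1).to_subtype
        exact Cardinal.mk_le_aleph0
      have ha : Cardinal.aleph0 ≤ α.card + Cardinal.aleph0 := le_add_self
      have h3 : (α.card + Cardinal.aleph0) * Cardinal.aleph0
          = α.card + Cardinal.aleph0 := by
        rw [Cardinal.mul_eq_max ha le_rfl, max_eq_left ha]
      calc Cardinal.mk ↥(⋃ s ∈ T α, D s)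
          ≤ Cardinal.mk ↥(T α) * Cardinal.aleph0 := h1
        _ ≤ (α.card + Cardinal.aleph0) * Cardinal.aleph0 :=
            mul_le_mul' (hcard α hα) le_rfl
        _ = α.card + Cardinal.aleph0 := h3
    · rw [hrange α hα]
      refine closure_minimal ?_ isClosed_closure
      intro x hx
      simp only [Set.mem_iUnion] at hx
      obtain ⟨s, hs, hxr⟩ := hx
      have hxc : x ∈ closure (D s) := hD3 s hxr
      exact closure_mono (fun y hy => Set.mem_iUnion₂.mpr ⟨s, hs, hy⟩) hxc
  · intro α β hαβ hβκ
    have hακ := lt_trans hαβ hβκ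
    simp only [dif_pos hακ, dif_pos hβκ]
    constructor
    · ext x
      simp only [ContinuousLinearMap.comp_apply]
      refine huniq α hακ (Qf β hβκ x) _ _ (hQf α hακ _) ?_
      intro ε hε
      obtain ⟨t, ht, h1⟩ := hQf α hακ x ε hε
      refine ⟨t, ht, ?_⟩
      intro s hs hts
      rw [hPQ β hβκ s (hmono α β hαβ.le hβκ hs) x]
      exact h1 s hs hts
    · ext x
      simp only [ContinuousLinearMap.comp_apply]
      apply hfix β hβκ
      have hx := hsub α hακ ⟨x, rfl⟩
      exact closure_mono
        (Set.biUnion_subset_biUnion_left (hmono α β hαβ.le hβκ)) hx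
  · intro δ hδκ hδlim
    simp only [dif_pos hδκ]
    rw [hrange δ hδκ]
    apply Set.Subset.antisymm
    · refine closure_minimal ?_ isClosed_closure
      intro x hx
      simp only [Set.mem_iUnion, Set.mem_range] at hx
      obtain ⟨s, hs, z, hz⟩ := hx
      rw [hcont δ hδκ hδlim] at hs
      simp only [Set.mem_iUnion] at hs
      obtain ⟨ξ, hξδ, hsξ⟩ := hs
      have hξκ := lt_trans hξδ hδκ
      apply subset_closure
      refine Set.mem_iUnion₂.mpr ⟨ξ, hξδ, ?_⟩
      simp only [dif_pos hξκ]
      rw [hrange ξ hξκ]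
      exact subset_closure (Set.mem_iUnion₂.mpr ⟨s, hsξ, ⟨z, hz⟩⟩)
    · refine closure_minimal ?_ isClosed_closure
      intro x hx
      simp only [Set.mem_iUnion] at hx
      obtain ⟨ξ, hξδ, hxr⟩ := hx
      have hξκ := lt_trans hξδ hδκ
      simp only [dif_pos hξκ] at hxr
      have hxc := hsub ξ hξκ hxr
      exact closure_mono
        (Set.biUnion_subset_biUnion_left (hmono ξ δ hξδ.le hδκ)) hxc
  · apply Set.eq_univ_of_univ_subset
    rw [← hdense]
    apply closure_mono
    intro x hx
    simp only [Set.mem_iUnion, Set.mem_range] at hx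
    obtain ⟨α, hα, s, hs, z, hz⟩ := hx
    refine Set.mem_iUnion₂.mpr ⟨α, hα, ?_⟩
    simp only [dif_pos hα]
    rw [hrange α hα]
    exact subset_closure (Set.mem_iUnion₂.mpr ⟨s, hs, ⟨z, hz⟩⟩)
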